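/- A term of the form f_1...f_n g_1...g_m(e), where f_n ∈ {∃, I}, f_1,...,f_{n-1} ∈ {p,s,¬,∃,I}, and g_1,...,g_m ∈ {p,s,¬}, with f_n = I, is satisfiable if and only if the parity of the number of negations in f_1...f_{n-1} equals the parity of the number of negations in g_1...g_m. -/

import Mathlib

/-- The unary operators of the algebra. -/
inductive Op : Type
  | p | s | i | neg | ex
deriving DecidableEq

/-- Permutation of `Fin n` swapping the last two coordinates (identity for `n ≤ 1`). -/
def swapLast (n : ℕ) : Equiv.Perm (Fin n) :=
  if h : 2 ≤ n then Equiv.swap ⟨n - 1, by omega⟩ ⟨n - 2, by omega⟩ else 1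

/-- Action of an operator on a relation (of some arity `n`) over `A`:
`p` moves the last coordinate to the front, `s` swaps the last two coordinates,
`neg` complements within `A^n`, `ex` projects away the last coordinate, and `i`
keeps tuples with equal last two coordinates and drops the last one; `p`, `s`,
`i` are the identity on arity `≤ 1` and `ex` the identity on arity `0`. -/
def applyOp (A : Type) : Op → (Σ n, Set (Fin n → A)) → (Σ n, Set (Fin n → A))
  | Op.p, ⟨n, R⟩ => ⟨n, {t | t ∘ (finRotate n) ∈ R}⟩
  | Op.s, ⟨n, R⟩ => ⟨n, {t | t ∘ (swapLast n) ∈ R}⟩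
  | Op.neg, ⟨n, R⟩ => ⟨n, Rᶜ⟩
  | Op.ex, ⟨0, R⟩ => ⟨0, R⟩
  | Op.ex, ⟨m + 1, R⟩ => ⟨m, {t | ∃ a : A, Fin.snoc t a ∈ R}⟩
  | Op.i, ⟨0, R⟩ => ⟨0, R⟩
  | Op.i, ⟨1, R⟩ => ⟨1, R⟩
  | Op.i, ⟨m + 2, R⟩ => ⟨m + 1, {t | Fin.snoc t (t (Fin.last m)) ∈ R}⟩

/-- Interpretation of a string of operators (head outermost) applied to a base
`k`-ary relation. -/
def interpOps (A : Type) (k : ℕ) (base : Set (Fin k → A)) :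
    List Op → Σ n, Set (Fin n → A)
  | [] => ⟨k, base⟩
  | op :: ops => applyOp A op (interpOps A k base ops)

/-- The binary identity relation `e` over `M`. -/
def eRel (M : Type) : Set (Fin 2 → M) := {t | t 0 = t 1}

lemma swap_pre (M : Type) (σ : Fin 2 → Fin 2) (h0 : σ 0 = 1) (h1 : σ 1 = 0) :
    {t : Fin 2 → M | t ∘ σ ∈ eRel M} = eRel M := by
  ext t
  simp [eRel, Function.comp, h0, h1, eq_comm]

lemma swap_pre_c (M : Type) (σ : Fin 2 → Fin 2) (h0 : σ 0 = 1) (h1 : σ 1 = 0) :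
    {t : Fin 2 → M | t ∘ σ ∈ (eRel M)ᶜ} = (eRel M)ᶜ := by
  have : {t : Fin 2 → M | t ∘ σ ∈ (eRel M)ᶜ} = {t : Fin 2 → M | t ∘ σ ∈ eRel M}ᶜ := rfl
  rw [this, swap_pre M σ h0 h1]

lemma interp_gs (M : Type) (gs : List Op)
    (hgs : ∀ g ∈ gs, g = Op.p ∨ g = Op.s ∨ g = Op.neg) :
    interpOps M 2 (eRel M) gs =
      ⟨2, if Even (gs.count Op.neg) then eRel M else (eRel M)ᶜ⟩ := by
  induction gs with
  | nil => simp [interpOps]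
  | cons g gs ih =>
    have ih' := ih (fun g hg => hgs g (List.mem_cons_of_mem _ hg))
    have hρ0 : (finRotate 2) 0 = 1 := by decide
    have hρ1 : (finRotate 2) 1 = 0 := by decide
    have hσ0 : (swapLast 2) 0 = 1 := by decide
    have hσ1 : (swapLast 2) 1 = 0 := by decide
    rcases hgs g List.mem_cons_self with h | h | h <;> subst h
    · show applyOp M Op.p (interpOps M 2 (eRel M) gs) = _
      rw [ih']
      show (⟨2, {t | t ∘ (finRotate 2) ∈ _}⟩ : Σ n, Set (Fin n → M)) = _
      have hc : (Op.p :: gs).count Op.neg = gs.count Op.neg := by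
        simp [List.count_cons]
      rw [hc]
      by_cases he : Even (gs.count Op.neg) <;> simp only [he, if_true, if_false] <;>
        exact congrArg (fun S => (⟨2, S⟩ : Σ n, Set (Fin n → M)))
          (by first | exact swap_pre M _ hρ0 hρ1 | exact swap_pre_c M _ hρ0 hρ1)
    · show applyOp M Op.s (interpOps M 2 (eRel M) gs) = _
      rw [ih']
      show (⟨2, {t | t ∘ (swapLast 2) ∈ _}⟩ : Σ n, Set (Fin n → M)) = _
      have hc : (Op.s :: gs).count Op.neg = gs.count Op.neg := by
        simp [List.count_cons]
      rw [hc]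
      by_cases he : Even (gs.count Op.neg) <;> simp only [he, if_true, if_false] <;>
        exact congrArg (fun S => (⟨2, S⟩ : Σ n, Set (Fin n → M)))
          (by first | exact swap_pre M _ hσ0 hσ1 | exact swap_pre_c M _ hσ0 hσ1)
    · show applyOp M Op.neg (interpOps M 2 (eRel M) gs) = _
      rw [ih']
      show (⟨2, (if Even (gs.count Op.neg) then eRel M else (eRel M)ᶜ)ᶜ⟩ : Σ n, Set (Fin n → M)) = _
      have hc : (Op.neg :: gs).count Op.neg = gs.count Op.neg + 1 := by
        simp [List.count_cons]
      rw [hc]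
      by_cases he : Even (gs.count Op.neg) <;>
        simp [he, Nat.even_add_one, compl_compl]

def Good (M : Type) (X : Σ n, Set (Fin n → M)) (b : Bool) : Prop :=
  X.1 ≤ 1 ∧ X.2 = (if b then Set.univ else ∅)

lemma good_step (M : Type) [Nonempty M] (f : Op) (X : Σ n, Set (Fin n → M)) (b : Bool)
    (h : Good M X b) :
    Good M (applyOp M f X) (if f = Op.neg then !b else b) := by
  obtain ⟨n, R⟩ := X
  obtain ⟨hn, hR⟩ := h
  simp only at hn hR
  rw [hR]
  match n, hn with
  | 0, _ =>
    cases f <;> cases b <;>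
      simp [applyOp, Good, Set.eq_empty_iff_forall_notMem, Set.eq_univ_iff_forall] <;> rfl
  | 1, _ =>
    cases f <;> cases b <;>
      simp [applyOp, Good, Set.eq_empty_iff_forall_notMem, Set.eq_univ_iff_forall] <;> rfl

lemma good_main (M : Type) [Nonempty M] (fs gs : List Op)
    (hgs : ∀ g ∈ gs, g = Op.p ∨ g = Op.s ∨ g = Op.neg) :
    Good M (interpOps M 2 (eRel M) (fs ++ Op.i :: gs))
      (decide (Even (fs.count Op.neg) ↔ Even (gs.count Op.neg))) := by
  induction fs with
  | nil =>
    rw [List.nil_append]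
    show Good M (applyOp M Op.i (interpOps M 2 (eRel M) gs)) _
    rw [interp_gs M gs hgs]
    by_cases he : Even (gs.count Op.neg)
    · rw [if_pos he]
      refine ⟨le_refl 1, ?_⟩
      have hb : decide (Even (List.count Op.neg []) ↔ Even (gs.count Op.neg)) = true := by
        simp [he]
      show {t : Fin 1 → M | Fin.snoc t (t (Fin.last 0)) ∈ eRel M}
          = if decide (Even (List.count Op.neg []) ↔ Even (gs.count Op.neg)) then Set.univ else ∅
      rw [hb, if_pos rfl]
      simp [eRel, Set.eq_univ_iff_forall, Fin.snoc]
    · rw [if_neg he]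
      refine ⟨le_refl 1, ?_⟩
      have hb : decide (Even (List.count Op.neg []) ↔ Even (gs.count Op.neg)) = false := by
        simp [he]
      show {t : Fin 1 → M | Fin.snoc t (t (Fin.last 0)) ∈ (eRel M)ᶜ}
          = if decide (Even (List.count Op.neg []) ↔ Even (gs.count Op.neg)) then Set.univ else ∅
      rw [hb, if_neg (by simp)]
      simp [eRel, Set.eq_empty_iff_forall_notMem, Fin.snoc]
  | cons f fs ih =>
    have h := good_step M f _ _ ih
    show Good M (applyOp M f (interpOps M 2 (eRel M) (fs ++ Op.i :: gs))) _
    have hb : decide (Even ((f :: fs).count Op.neg) ↔ Even (gs.count Op.neg))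
        = (if f = Op.neg then !(decide (Even (fs.count Op.neg) ↔ Even (gs.count Op.neg)))
            else decide (Even (fs.count Op.neg) ↔ Even (gs.count Op.neg))) := by
      by_cases hf : f = Op.neg
      · subst hf
        have hc : (Op.neg :: fs).count Op.neg = fs.count Op.neg + 1 := by
          simp [List.count_cons]
        rw [hc, if_pos rfl, ← decide_not, decide_eq_decide, Nat.even_add_one]
        tauto
      · rw [if_neg hf]
        have hc : (f :: fs).count Op.neg = fs.count Op.neg := by
          simp [List.count_cons, hf]
        rw [hc]
    rw [hb]
    exact h


/-- A term `f₁…f_{n-1} I g₁…g_m(e)` with `g₁,…,g_m ∈ {p,s,¬}` is satisfiable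
iff the parity of negations among `f₁,…,f_{n-1}` equals the parity of negations
among `g₁,…,g_m`. -/
theorem sat_of_I_term (fs gs : List Op)
    (hgs : ∀ g ∈ gs, g = Op.p ∨ g = Op.s ∨ g = Op.neg) :
    (∃ (M : Type), Nonempty M ∧
        (interpOps M 2 (eRel M) (fs ++ Op.i :: gs)).2.Nonempty) ↔
      (Even (fs.count Op.neg) ↔ Even (gs.count Op.neg)) := by
  constructor
  · rintro ⟨M, hM, hne⟩
    haveI := hM
    by_contra hc
    obtain ⟨h1, h2⟩ := good_main M fs gs hgs
    rw [decide_eq_false hc, if_neg (by simp)] at h2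
    rcases hne with ⟨t, ht⟩
    rw [h2] at ht
    exact ht
  · intro hparity
    refine ⟨PUnit, ⟨⟨⟩⟩, ?_⟩
    obtain ⟨h1, h2⟩ := good_main PUnit fs gs hgs
    rw [decide_eq_true hparity, if_pos rfl] at h2
    rw [h2]
    exact Set.univ_nonempty
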